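/- Let G ≤ Aut(T) be a virtually super strongly fractal closed subgroup. Then the following are equivalent: (i) G is mixing; (ii) G has no proper projection-invariant open subgroup. -/

import Mathlib

open MeasureTheory

namespace ArbGal

/-- Vertices of the `d`-regular rooted tree: the free monoid on `{0, …, d-1}`. -/
abbrev V (d : ℕ) := List (Fin d)

instance (d : ℕ) : TopologicalSpace (V d) := ⊥

/-- A permutation of the vertices is an automorphism of the rooted tree iff it
preserves the level of vertices and the prefix (ancestor) relation. -/
def IsTreeAut {d : ℕ} (g : Equiv.Perm (V d)) : Prop :=
  (∀ v : V d, (g v).length = v.length) ∧ ∀ u v : V d, u <+: v → g u <+: g v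

/-- The automorphism group `Aut(T)` of the `d`-regular rooted tree, realized as a
subgroup of the permutation group of the set of vertices. -/
def treeAutGroup (d : ℕ) : Subgroup (Equiv.Perm (V d)) where
  carrier := {g | IsTreeAut g}
  one_mem' := ⟨fun _ => rfl, fun _ _ h => h⟩
  mul_mem' := by
    rintro a b ⟨ha1, ha2⟩ ⟨hb1, hb2⟩
    refine ⟨fun v => ?_, fun u v h => ?_⟩
    · simp only [Equiv.Perm.mul_apply, ha1, hb1]
    · simpa only [Equiv.Perm.mul_apply] using ha2 _ _ (hb2 _ _ h)
  inv_mem' := by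
    rintro g ⟨h1, h2⟩
    have hlen : ∀ v : V _, (g⁻¹ v).length = v.length := by
      intro v
      have := h1 (g⁻¹ v)
      rw [(Equiv.Perm.eq_inv_iff_eq.mp rfl)] at this
      exact this.symm
    refine ⟨hlen, fun u v huv => ?_⟩
    have h3 : (g⁻¹ v).take (g⁻¹ u).length <+: g⁻¹ v := List.take_prefix _ _
    have h4 : g ((g⁻¹ v).take (g⁻¹ u).length) <+: g (g⁻¹ v) := h2 _ _ h3
    rw [(Equiv.Perm.eq_inv_iff_eq.mp rfl)] at h4
    have hlen4 : (g ((g⁻¹ v).take (g⁻¹ u).length)).length = u.length := by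
      rw [h1, List.length_take, hlen, hlen]
      exact min_eq_left huv.length_le
    have h5 : g ((g⁻¹ v).take (g⁻¹ u).length) = u := by
      rcases List.prefix_or_prefix_of_prefix h4 huv with h | h
      · exact h.eq_of_length hlen4
      · exact (h.eq_of_length hlen4.symm).symm
    have h6 : (g⁻¹ v).take (g⁻¹ u).length = g⁻¹ u := by
      apply g.injective
      rw [h5, (Equiv.Perm.eq_inv_iff_eq.mp rfl)]
    rw [← h6]
    exact List.take_prefix _ _

/-- The group `Aut(T)`, as a type. -/
abbrev AutT (d : ℕ) := ↥(treeAutGroup d)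

/-- `Aut(T)` carries the congruence topology, i.e. the topology of pointwise
convergence on the (discrete) set of vertices. -/
instance (d : ℕ) : TopologicalSpace (Equiv.Perm (V d)) :=
  TopologicalSpace.induced (fun g => (g : V d → V d)) Pi.topologicalSpace

variable {d : ℕ}

lemma autT_len (g : AutT d) (v : V d) : ((g : Equiv.Perm (V d)) v).length = v.length := g.2.1 v

lemma autT_prefix (g : AutT d) {u v : V d} (h : u <+: v) :
    (g : Equiv.Perm (V d)) u <+: (g : Equiv.Perm (V d)) v := g.2.2 u v h

/-- The underlying function of the section `g|_v`. -/
def secFun (g : AutT d) (v w : V d) : V d := ((g : Equiv.Perm (V d)) (v ++ w)).drop v.length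

lemma sec_spec (g : AutT d) (v w : V d) :
    (g : Equiv.Perm (V d)) (v ++ w) = (g : Equiv.Perm (V d)) v ++ secFun g v w := by
  have h1 : (g : Equiv.Perm (V d)) v <+: (g : Equiv.Perm (V d)) (v ++ w) :=
    autT_prefix g (List.prefix_append v w)
  have h2 := autT_len g v
  have h3 : (g : Equiv.Perm (V d)) v = ((g : Equiv.Perm (V d)) (v ++ w)).take v.length := by
    rw [← h2]; exact List.prefix_iff_eq_take.mp h1
  conv_lhs => rw [← List.take_append_drop v.length ((g : Equiv.Perm (V d)) (v ++ w))]
  rw [← h3]; rfl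

lemma coe_inv (g : AutT d) : ((g⁻¹ : AutT d) : Equiv.Perm (V d)) = (g : Equiv.Perm (V d))⁻¹ := rfl

lemma sec_spec' (g : AutT d) (v w : V d) :
    (g : Equiv.Perm (V d)) (v ++ w)
      = (g : Equiv.Perm (V d)) v ++ List.drop v.length ((g : Equiv.Perm (V d)) (v ++ w)) :=
  sec_spec g v w

/-- The section (state) `g|_v` of a tree automorphism `g` at the vertex `v`; it is
the unique automorphism satisfying `g(v·w) = g(v)·(g|_v)(w)` for all `w`. -/
def sectionAt (g : AutT d) (v : V d) : AutT d :=
  ⟨{ toFun := secFun g v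
     invFun := secFun g⁻¹ ((g : Equiv.Perm (V d)) v)
     left_inv := by
       intro w
       show secFun g⁻¹ ((g : Equiv.Perm (V d)) v) (secFun g v w) = w
       unfold secFun
       rw [coe_inv, ← sec_spec' g v w, (Equiv.Perm.inv_eq_iff_eq.mpr rfl), autT_len, List.drop_left]
     right_inv := by
       intro w
       show secFun g v (secFun g⁻¹ ((g : Equiv.Perm (V d)) v) w) = w
       unfold secFun
       rw [coe_inv]
       have h := sec_spec' g⁻¹ ((g : Equiv.Perm (V d)) v) w
       rw [coe_inv, (Equiv.Perm.inv_eq_iff_eq.mpr rfl)] at h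
       rw [← h, (Equiv.Perm.eq_inv_iff_eq.mp rfl), ← autT_len g v, List.drop_left] },
   by
     constructor
     · intro w
       show (secFun g v w).length = w.length
       unfold secFun
       rw [List.length_drop, autT_len, List.length_append]
       omega
     · intro u w huw
       show secFun g v u <+: secFun g v w
       have h1 : v ++ u <+: v ++ w := by
         obtain ⟨c, rfl⟩ := huw
         rw [← List.append_assoc]
         exact List.prefix_append _ _
       have h2 := autT_prefix g h1
       rw [sec_spec g v u, sec_spec g v w] at h2
       obtain ⟨c, hc⟩ := h2
       rw [List.append_assoc] at hc
       exact ⟨c, List.append_cancel_left hc⟩⟩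

/-- The pointwise stabilizer `St(n)` of the `n`-th level, as a subgroup of `Aut(T)`. -/
def levelStab (d n : ℕ) : Subgroup (AutT d) where
  carrier := {g | ∀ v : V d, v.length = n → (g : Equiv.Perm (V d)) v = v}
  one_mem' := fun _ _ => rfl
  mul_mem' := by
    rintro a b ha hb v hv
    show (a : Equiv.Perm (V d)) ((b : Equiv.Perm (V d)) v) = v
    rw [hb v hv, ha v hv]
  inv_mem' := by
    intro g hg v hv
    show (g : Equiv.Perm (V d))⁻¹ v = v
    conv_lhs => rw [← hg v hv]
    exact Equiv.Perm.inv_eq_iff_eq.mpr rfl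

/-- Two automorphisms agree on the truncated tree `T^m` (have the same image
under `π_m`). -/
def truncEq (d : ℕ) (m : ℕ) (g h : AutT d) : Prop :=
  ∀ w : V d, w.length ≤ m → (g : Equiv.Perm (V d)) w = (h : Equiv.Perm (V d)) w

/-- `St_G(n)_v^m = π_m(G)`: the projection of the `n`-th level stabilizer of `G`
at the vertex `v`, truncated at depth `m`, coincides with `π_m(G)`. -/
def SectModEq (d : ℕ) (G : Subgroup (AutT d)) (n m : ℕ) (v : V d) : Prop :=
  ∀ a : AutT d,
    (∃ g, g ∈ G ∧ g ∈ levelStab d n ∧ (g : Equiv.Perm (V d)) v = v ∧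
        truncEq d m (sectionAt g v) a)
    ↔ (∃ b ∈ G, truncEq d m b a)

/-- `G` is self-similar: all sections of elements of `G` belong to `G`. -/
def SelfSimilar (d : ℕ) (G : Subgroup (AutT d)) : Prop :=
  ∀ g ∈ G, ∀ v : V d, sectionAt g v ∈ G

/-- `G` is level-transitive. -/
def LevelTrans (d : ℕ) (G : Subgroup (AutT d)) : Prop :=
  ∀ v w : V d, v.length = w.length → ∃ g ∈ G, (g : Equiv.Perm (V d)) v = w

/-- `G` is fractal: self-similar, level-transitive, and every projection
`G_v = φ_v(st_G(v))` is all of `G`. -/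
def Fractal (d : ℕ) (G : Subgroup (AutT d)) : Prop :=
  SelfSimilar d G ∧ LevelTrans d G ∧
    ∀ v : V d, ∀ h ∈ G, ∃ g ∈ G, (g : Equiv.Perm (V d)) v = v ∧ sectionAt g v = h

/-- For every `n ≥ 1`, the level stabilizer `St_G(n)` acts level-transitively on the
subtrees rooted at the vertices of level `n`. -/
def StabLevelTrans (d : ℕ) (G : Subgroup (AutT d)) : Prop :=
  ∀ n : ℕ, 1 ≤ n → ∀ v u w : V d, v.length = n → u.length = w.length →
    ∃ g ∈ G ⊓ levelStab d n, (g : Equiv.Perm (V d)) (v ++ u) = v ++ w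

/-- A fractal group `G ≤ Aut(T)` is mixing with delay constant `N`. -/
def MixingWithDelay (d : ℕ) (G : Subgroup (AutT d)) (N : ℕ) : Prop :=
  Fractal d G ∧ StabLevelTrans d G ∧
    ∀ m : ℕ, 1 ≤ m → ∀ n : ℕ, 1 ≤ n → ∀ v : V d, n + N ≤ v.length → SectModEq d G n m v

/-- A fractal group `G ≤ Aut(T)` is mixing: its level stabilizers act
level-transitively below their level, and for all `n, m ≥ 1` there is a delay
`N = N(m)` with `St_G(n)_v^m = π_m(G)` whenever `|v| ≥ n + N`. -/
def Mixing (d : ℕ) (G : Subgroup (AutT d)) : Prop :=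
  Fractal d G ∧ StabLevelTrans d G ∧
    ∀ m : ℕ, 1 ≤ m → ∃ N : ℕ,
      ∀ n : ℕ, 1 ≤ n → ∀ v : V d, n + N ≤ v.length → SectModEq d G n m v

/-- `g` fixes an end of the tree `T`, i.e. an infinite rooted path. -/
def FixesEnd (d : ℕ) (g : AutT d) : Prop :=
  ∃ ω : ℕ → Fin d, ∀ n : ℕ,
    (g : Equiv.Perm (V d)) (List.ofFn (fun i : Fin n => ω i)) = List.ofFn (fun i : Fin n => ω i)

/-- `X_n(g)`: the number of vertices of level `n` fixed by `g`. -/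
noncomputable def Xfix (d n : ℕ) (g : AutT d) : ℕ :=
  Set.ncard {w : Fin n → Fin d |
    (g : Equiv.Perm (V d)) (List.ofFn w) = List.ofFn w}

/-- The Borel σ-algebra on a closed subgroup of `Aut(T)`. -/
instance (d : ℕ) (G : Subgroup (AutT d)) : MeasurableSpace ↥G := borel ↥G

/-- The fixed-point process `{X_n}` of `G`, with respect to the measure `μ` on `G`,
is a martingale. -/
def FPMartingale (d : ℕ) (G : Subgroup (AutT d)) (μ : Measure ↥G) : Prop :=
  (∀ n : ℕ, 1 ≤ n → Integrable (fun g : ↥G => (Xfix d n (g : AutT d) : ℝ)) μ) ∧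
  ∀ n : ℕ, 1 ≤ n → ∀ t : ℕ → ℝ,
    μ {g : ↥G | ∀ i, 1 ≤ i → i ≤ n → (Xfix d i (g : AutT d) : ℝ) = t i} ≠ 0 →
    ∫ g in {g : ↥G | ∀ i, 1 ≤ i → i ≤ n → (Xfix d i (g : AutT d) : ℝ) = t i},
        (Xfix d (n + 1) (g : AutT d) : ℝ) ∂μ
      = t n * (μ {g : ↥G | ∀ i, 1 ≤ i → i ≤ n → (Xfix d i (g : AutT d) : ℝ) = t i}).toReal


/-- A subgroup `H ≤ Aut(T)` is projection-invariant if `H_v ≤ H` for every vertex `v`. -/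
def ProjInvariant (d : ℕ) (H : Subgroup (AutT d)) : Prop :=
  ∀ h ∈ H, ∀ v : V d, (h : Equiv.Perm (V d)) v = v → sectionAt h v ∈ H

/-- The subgroup `K_G = ⋂_{v ∈ γ} St_G(|v|)_v` (independent of the end `γ` for a
fractal group `G`), here realized as the intersection over all vertices. -/
def KGset (d : ℕ) (G : Subgroup (AutT d)) : Set (AutT d) :=
  {x | ∀ v : V d, ∃ g, g ∈ G ∧ g ∈ levelStab d v.length ∧ sectionAt g v = x}

/-- `G` is virtually super strongly fractal: `G` is fractal, `K_G` has finite index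
in `G`, and every level stabilizer `St_G(n)` acts level-transitively on the subtrees
rooted at level `n`. -/
def VirtSuperStronglyFractal (d : ℕ) (G : Subgroup (AutT d)) : Prop :=
  Fractal d G ∧ StabLevelTrans d G ∧
    ∃ S : Finset (AutT d), (↑S : Set (AutT d)) ⊆ (G : Set (AutT d)) ∧
      ∀ g ∈ G, ∃ s ∈ S, s⁻¹ * g ∈ KGset d G


section Basic
variable {d : ℕ}

lemma autT_ext {g h : AutT d} (H : ∀ v : V d, (g : Equiv.Perm (V d)) v = (h : Equiv.Perm (V d)) v) : g = h :=
  Subtype.ext (Equiv.ext H)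

lemma autT_mul_apply (g h : AutT d) (v : V d) :
    ((g * h : AutT d) : Equiv.Perm (V d)) v = (g : Equiv.Perm (V d)) ((h : Equiv.Perm (V d)) v) := rfl

lemma autT_one_apply (v : V d) : ((1 : AutT d) : Equiv.Perm (V d)) v = v := rfl

lemma sectionAt_apply (g : AutT d) (v w : V d) :
    ((sectionAt g v : AutT d) : Equiv.Perm (V d)) w
      = ((g : Equiv.Perm (V d)) (v ++ w)).drop v.length := rfl

lemma sectionAt_one (v : V d) : sectionAt (1 : AutT d) v = 1 := by
  refine autT_ext fun w => ?_
  rw [sectionAt_apply, autT_one_apply, autT_one_apply, List.drop_left]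

lemma sectionAt_mul (g h : AutT d) (v : V d) :
    sectionAt (g * h) v = sectionAt g ((h : Equiv.Perm (V d)) v) * sectionAt h v := by
  refine autT_ext fun w => ?_
  rw [sectionAt_apply, autT_mul_apply, autT_mul_apply, sectionAt_apply, sectionAt_apply,
    ← sec_spec' h v w, autT_len h v]

lemma sectionAt_inv (g : AutT d) (v : V d) :
    sectionAt g⁻¹ ((g : Equiv.Perm (V d)) v) = (sectionAt g v)⁻¹ := by
  have h := sectionAt_mul g⁻¹ g v
  rw [inv_mul_cancel, sectionAt_one] at h
  exact eq_inv_of_mul_eq_one_left h.symm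

lemma sectionAt_append (g : AutT d) (v w : V d) :
    sectionAt g (v ++ w) = sectionAt (sectionAt g v) w := by
  refine autT_ext fun z => ?_
  rw [sectionAt_apply, sectionAt_apply, sectionAt_apply, List.append_assoc,
    List.drop_drop, List.length_append]

end Basic

section StabTrunc
variable {d : ℕ}

lemma levelStab_fix {n : ℕ} {g : AutT d} (hg : g ∈ levelStab d n) {v : V d}
    (hv : v.length = n) : (g : Equiv.Perm (V d)) v = v := hg v hv

lemma levelStab_fix_le (hd : 0 < d) {n : ℕ} {g : AutT d} (hg : g ∈ levelStab d n) {v : V d}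
    (hv : v.length ≤ n) : (g : Equiv.Perm (V d)) v = v := by
  set v' : V d := v ++ List.replicate (n - v.length) ⟨0, hd⟩ with hv'
  have hlen' : v'.length = n := by simp [hv']; omega
  have hfix : (g : Equiv.Perm (V d)) v' = v' := hg v' hlen'
  have h1 : (g : Equiv.Perm (V d)) v <+: v' := by
    have := autT_prefix g (List.prefix_append v (List.replicate (n - v.length) ⟨0, hd⟩))
    rwa [hfix] at this
  have h2 : v <+: v' := List.prefix_append _ _
  have h3 := List.prefix_iff_eq_take.mp h1
  have h4 := List.prefix_iff_eq_take.mp h2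
  rw [h3, autT_len, ← h4]

lemma levelStab_mono (hd : 0 < d) {n n' : ℕ} (h : n ≤ n') :
    levelStab d n' ≤ levelStab d n := by
  intro g hg v hv
  exact levelStab_fix_le hd hg (by omega)

lemma sectionAt_mem_levelStab {n : ℕ} {g : AutT d} (hg : g ∈ levelStab d n) {p : V d}
    (hp : p.length ≤ n) : sectionAt g p ∈ levelStab d (n - p.length) := by
  intro u hu
  rw [sectionAt_apply, hg (p ++ u) (by simp; omega), List.drop_left]

lemma truncEq_refl (m : ℕ) (g : AutT d) : truncEq d m g g := fun _ _ => rfl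

lemma truncEq_symm {m : ℕ} {g h : AutT d} (H : truncEq d m g h) : truncEq d m h g :=
  fun w hw => (H w hw).symm

lemma truncEq_trans {m : ℕ} {g h k : AutT d} (H1 : truncEq d m g h) (H2 : truncEq d m h k) :
    truncEq d m g k := fun w hw => (H1 w hw).trans (H2 w hw)

lemma truncEq_mul {m : ℕ} {x x' y y' : AutT d} (hx : truncEq d m x x') (hy : truncEq d m y y') :
    truncEq d m (x * y) (x' * y') := by
  intro w hw
  rw [autT_mul_apply, autT_mul_apply, hy w hw, hx _ (by rw [autT_len]; exact hw)]

lemma truncEq_inv {m : ℕ} {x y : AutT d} (hx : truncEq d m x y) : truncEq d m x⁻¹ y⁻¹ := by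
  intro w hw
  have h1 : ((y⁻¹ : AutT d) : Equiv.Perm (V d)) w = (y : Equiv.Perm (V d))⁻¹ w := rfl
  have h2 : ((x⁻¹ : AutT d) : Equiv.Perm (V d)) w = (x : Equiv.Perm (V d))⁻¹ w := rfl
  rw [h1, h2]
  have hlen : ((y : Equiv.Perm (V d))⁻¹ w).length = w.length := by
    rw [← coe_inv, autT_len]
  have : (x : Equiv.Perm (V d)) ((y : Equiv.Perm (V d))⁻¹ w) = w := by
    rw [hx _ (by rw [hlen]; exact hw), (Equiv.Perm.eq_inv_iff_eq.mp rfl)]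
  calc (x : Equiv.Perm (V d))⁻¹ w = (x : Equiv.Perm (V d))⁻¹
        ((x : Equiv.Perm (V d)) ((y : Equiv.Perm (V d))⁻¹ w)) := by rw [this]
    _ = (y : Equiv.Perm (V d))⁻¹ w := Equiv.Perm.inv_eq_iff_eq.mpr rfl

lemma truncEq_mono {m m' : ℕ} (h : m' ≤ m) {x y : AutT d} (hx : truncEq d m x y) :
    truncEq d m' x y := fun w hw => hx w (le_trans hw h)

lemma truncEq_sectionAt {m : ℕ} {x y : AutT d} (w : V d)
    (hx : truncEq d (m + w.length) x y) : truncEq d m (sectionAt x w) (sectionAt y w) := by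
  intro z hz
  rw [sectionAt_apply, sectionAt_apply, hx (w ++ z) (by simp; omega)]

lemma truncEq_inv_mul_mem {n : ℕ} {s b : AutT d} (h : truncEq d n s b) :
    s⁻¹ * b ∈ levelStab d n := by
  intro v hv
  rw [autT_mul_apply]
  have h1 : ((s⁻¹ : AutT d) : Equiv.Perm (V d)) = (s : Equiv.Perm (V d))⁻¹ := rfl
  rw [h1, ← h v (le_of_eq hv), (Equiv.Perm.inv_eq_iff_eq.mpr rfl)]

end StabTrunc

section Transfer
variable {d : ℕ} {G : Subgroup (AutT d)}

lemma exists_conj_one (hfr : Fractal d G) {v v' : V d} (hlen : v'.length = v.length) :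
    ∃ h, h ∈ G ∧ (h : Equiv.Perm (V d)) v' = v ∧ sectionAt h v' = 1 := by
  obtain ⟨hss, hlt, hsec⟩ := hfr
  obtain ⟨h₀, hh₀, hh₀v⟩ := hlt v' v hlen
  have ht : sectionAt h₀ v' ∈ G := hss h₀ hh₀ v'
  obtain ⟨h₁, hh₁, hh₁v, hh₁s⟩ := hsec v' (sectionAt h₀ v')⁻¹ (inv_mem ht)
  refine ⟨h₀ * h₁, mul_mem hh₀ hh₁, ?_, ?_⟩
  · rw [autT_mul_apply, hh₁v, hh₀v]
  · rw [sectionAt_mul, hh₁v, hh₁s, mul_inv_cancel]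

lemma conj_mem_levelStab {n : ℕ} {g : AutT d} (hg : g ∈ levelStab d n) (h : AutT d) :
    h⁻¹ * g * h ∈ levelStab d n := by
  intro v hv
  rw [autT_mul_apply, autT_mul_apply, hg _ (by rw [autT_len]; exact hv), coe_inv,
    (Equiv.Perm.inv_eq_iff_eq.mpr rfl)]

/-- `St_G(n)_v^m ∋ b` (witnessed by an element fixing `v`). -/
def SSec (G : Subgroup (AutT d)) (n m : ℕ) (v : V d) (b : AutT d) : Prop :=
  ∃ g, g ∈ G ∧ g ∈ levelStab d n ∧ (g : Equiv.Perm (V d)) v = v ∧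
    truncEq d m (sectionAt g v) b

lemma SSec_transfer (hfr : Fractal d G) {n m : ℕ} {v v' : V d} {b : AutT d}
    (hlen : v'.length = v.length) (h : SSec G n m v b) : SSec G n m v' b := by
  obtain ⟨g, hgG, hgS, hgv, hgt⟩ := h
  obtain ⟨h, hhG, hhv, hhs⟩ := exists_conj_one hfr hlen
  refine ⟨h⁻¹ * g * h, mul_mem (mul_mem (inv_mem hhG) hgG) hhG,
    conj_mem_levelStab hgS h, ?_, ?_⟩
  · rw [autT_mul_apply, autT_mul_apply, hhv, hgv, ← hhv, coe_inv, (Equiv.Perm.inv_eq_iff_eq.mpr rfl)]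
  · have hsec : sectionAt (h⁻¹ * g * h) v' = sectionAt g v := by
      rw [sectionAt_mul, hhv, sectionAt_mul, hgv, hhs, mul_one, ← hhv,
        sectionAt_inv, hhs, inv_one, one_mul]
    rw [hsec]
    exact hgt

/-- uniform-gap approximation predicate -/
def PP (G : Subgroup (AutT d)) (m N : ℕ) (b : AutT d) : Prop :=
  ∀ n, 1 ≤ n → ∀ v : V d, v.length = n + N → SSec G n m v b

lemma PP_mono_N (hd : 0 < d) {m N N' : ℕ} (hN : N ≤ N') {b : AutT d}
    (h : PP G m N b) : PP G m N' b := by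
  intro n hn v hv
  obtain ⟨g, hgG, hgS, hgv, hgt⟩ := h (n + (N' - N)) (by omega) v (by omega)
  exact ⟨g, hgG, levelStab_mono hd (by omega) hgS, hgv, hgt⟩

lemma PP_one {m N : ℕ} : PP G m N (1 : AutT d) := by
  intro n hn v hv
  exact ⟨1, one_mem G, one_mem _, rfl, by rw [sectionAt_one]; exact truncEq_refl _ _⟩

lemma PP_mul {m N : ℕ} {b c : AutT d} (hb : PP G m N b) (hc : PP G m N c) :
    PP G m N (b * c) := by
  intro n hn v hv
  obtain ⟨g, hgG, hgS, hgv, hgt⟩ := hb n hn v hv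
  obtain ⟨k, hkG, hkS, hkv, hkt⟩ := hc n hn v hv
  refine ⟨g * k, mul_mem hgG hkG, mul_mem hgS hkS, by rw [autT_mul_apply, hkv, hgv], ?_⟩
  rw [sectionAt_mul, hkv]
  exact truncEq_mul hgt hkt

lemma PP_inv {m N : ℕ} {b : AutT d} (hb : PP G m N b) : PP G m N b⁻¹ := by
  intro n hn v hv
  obtain ⟨g, hgG, hgS, hgv, hgt⟩ := hb n hn v hv
  refine ⟨g⁻¹, inv_mem hgG, inv_mem hgS, by rw [coe_inv, ← hgv, (Equiv.Perm.inv_eq_iff_eq.mpr rfl), hgv], ?_⟩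
  have : sectionAt g⁻¹ v = (sectionAt g v)⁻¹ := by
    conv_lhs => rw [← hgv]
    exact sectionAt_inv g v
  rw [this]
  exact truncEq_inv hgt

lemma PP_of_KG {m : ℕ} {b : AutT d} (hb : b ∈ KGset d G) : PP G m 0 b := by
  intro n hn v hv
  obtain ⟨g, hgG, hgS, hgsec⟩ := hb v
  have hn' : v.length = n := by omega
  refine ⟨g, hgG, by rw [← hn']; exact hgS, hgS v rfl, ?_⟩
  rw [hgsec]
  exact truncEq_refl _ _

lemma PP_sectionAt (hd : 0 < d) (hfr : Fractal d G) {m N : ℕ} {b : AutT d} (w : V d)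
    (hbw : (b : Equiv.Perm (V d)) w = w) (hb : PP G (m + w.length) N b) :
    PP G m (N + 2 * w.length) (sectionAt b w) := by
  intro n hn v hv
  set u : V d := List.replicate (n + w.length + N) ⟨0, hd⟩ with hu
  have hulen : u.length = (n + w.length) + N := by simp [hu]
  obtain ⟨g, hgG, hgS, hgu, hgt⟩ := hb (n + w.length) (by omega) u hulen
  have hsecw : ((sectionAt g u : AutT d) : Equiv.Perm (V d)) w = w := by
    rw [hgt w (by omega), hbw]
  have hguw : (g : Equiv.Perm (V d)) (u ++ w) = u ++ w := by
    rw [sec_spec g u w, hgu]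
    exact congrArg (u ++ ·) hsecw
  have hkey : SSec G n m (u ++ w) (sectionAt b w) := by
    refine ⟨g, hgG, levelStab_mono hd (by omega) hgS, hguw, ?_⟩
    rw [sectionAt_append]
    exact truncEq_sectionAt w hgt
  refine SSec_transfer hfr ?_ hkey
  rw [hv, List.length_append, hulen]
  omega

end Transfer

section Topology
variable {d : ℕ}

instance : DiscreteTopology (V d) := ⟨rfl⟩

/-- The realization of a tree automorphism as a function on vertices. -/
def phi (d : ℕ) : AutT d → (V d → V d) := fun g => ⇑(g : Equiv.Perm (V d))

lemma isInducing_phi : Topology.IsInducing (phi d) := by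
  constructor
  show TopologicalSpace.induced Subtype.val (instTopologicalSpacePermV d) = _
  rw [show instTopologicalSpacePermV d = TopologicalSpace.induced
      (fun g : Equiv.Perm (V d) => (g : V d → V d)) Pi.topologicalSpace from rfl]
  exact induced_compose

lemma injective_phi : Function.Injective (phi d) := fun g h hgh =>
  Subtype.ext (Equiv.coe_fn_injective hgh)

lemma isEmbedding_phi : Topology.IsEmbedding (phi d) := ⟨isInducing_phi, injective_phi⟩

instance : T2Space (AutT d) := isEmbedding_phi.t2Space

lemma finite_len_le (m : ℕ) : Finite {l : V d // l.length ≤ m} :=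
  (List.finite_length_le (Fin d) m).to_subtype

lemma finite_len_eq (m : ℕ) : Finite {l : V d // l.length = m} :=
  @Finite.Set.subset _ _ _ (List.finite_length_le (Fin d) m)
    (fun l (hl : l.length = m) => le_of_eq hl)

lemma range_phi :
    Set.range (phi d) = {f : V d → V d | (∀ v, (f v).length = v.length) ∧
      (∀ u v, u <+: v → f u <+: f v) ∧ Function.Injective f} := by
  ext f
  constructor
  · rintro ⟨g, rfl⟩
    exact ⟨autT_len g, fun u v h => autT_prefix g h, (g : Equiv.Perm (V d)).injective⟩
  · rintro ⟨hlen, hpre, hinj⟩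
    have hsurj : Function.Surjective f := by
      intro w
      have : Finite {l : V d // l.length = w.length} := finite_len_eq w.length
      set f' : {l : V d // l.length = w.length} → {l : V d // l.length = w.length} :=
        fun l => ⟨f l.1, by rw [hlen]; exact l.2⟩ with hf'
      have hinj' : Function.Injective f' := by
        intro a b hab
        exact Subtype.ext (hinj (congrArg Subtype.val hab))
      obtain ⟨u, hu⟩ := Finite.injective_iff_surjective.mp hinj' ⟨w, rfl⟩
      exact ⟨u.1, congrArg Subtype.val hu⟩
    refine ⟨⟨Equiv.ofBijective f ⟨hinj, hsurj⟩, ⟨hlen, hpre⟩⟩, rfl⟩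

lemma isCompact_range_phi : IsCompact (Set.range (phi d)) := by
  rw [range_phi]
  have h1 : IsCompact (Set.pi Set.univ (fun v : V d => {w : V d | w.length = v.length})) := by
    refine isCompact_univ_pi fun v => ?_
    exact Set.Finite.isCompact (Set.Finite.subset (List.finite_length_le (Fin d) v.length)
      (fun l hl => le_of_eq hl))
  have h2 : IsClosed {f : V d → V d | (∀ u v : V d, u <+: v → f u <+: f v) ∧
      Function.Injective f} := by
    have hc1 : IsClosed {f : V d → V d | ∀ u v : V d, u <+: v → f u <+: f v} := by
      have : {f : V d → V d | ∀ u v : V d, u <+: v → f u <+: f v}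
          = ⋂ (u : V d) (v : V d),
            (fun f : V d → V d => (f u, f v)) ⁻¹' {p : V d × V d | u <+: v → p.1 <+: p.2} := by
        ext f; simp
      rw [this]
      exact isClosed_iInter fun u => isClosed_iInter fun v =>
        IsClosed.preimage ((continuous_apply u).prodMk (continuous_apply v))
          (isClosed_discrete _)
    have hc2 : IsClosed {f : V d → V d | Function.Injective f} := by
      have : {f : V d → V d | Function.Injective f}
          = ⋂ (u : V d) (v : V d),
            (fun f : V d → V d => (f u, f v)) ⁻¹' {p : V d × V d | p.1 = p.2 → u = v} := by
        ext f
        simp only [Set.mem_setOf_eq, Set.mem_iInter, Set.mem_preimage]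
        exact ⟨fun h u v huv => h huv, fun h => fun u v huv => h u v huv⟩
      rw [this]
      exact isClosed_iInter fun u => isClosed_iInter fun v =>
        IsClosed.preimage ((continuous_apply u).prodMk (continuous_apply v))
          (isClosed_discrete _)
    exact hc1.inter hc2
  have heq : {f : V d → V d | (∀ v, (f v).length = v.length) ∧
      (∀ u v, u <+: v → f u <+: f v) ∧ Function.Injective f}
      = Set.pi Set.univ (fun v : V d => {w : V d | w.length = v.length})
        ∩ {f : V d → V d | (∀ u v : V d, u <+: v → f u <+: f v) ∧ Function.Injective f} := by
    ext f
    simp only [Set.mem_setOf_eq, Set.mem_inter_iff, Set.mem_pi, Set.mem_univ, forall_true_left]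
  rw [heq]
  exact h1.inter_right h2

instance : CompactSpace (AutT d) := by
  rw [← isCompact_univ_iff, isEmbedding_phi.isCompact_iff, Set.image_univ]
  exact isCompact_range_phi

lemma continuous_eval (v : V d) : Continuous (fun g : AutT d => (g : Equiv.Perm (V d)) v) :=
  (continuous_apply v).comp isInducing_phi.continuous

lemma continuous_sectionAt (v : V d) : Continuous (fun g : AutT d => sectionAt g v) := by
  rw [isInducing_phi.continuous_iff]
  refine continuous_pi fun w => ?_
  show Continuous fun g : AutT d => ((sectionAt g v : AutT d) : Equiv.Perm (V d)) w
  simp only [sectionAt_apply]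
  exact continuous_of_discreteTopology.comp (continuous_eval (v ++ w))

lemma continuous_mul_left (s : AutT d) : Continuous (fun x : AutT d => s * x) := by
  rw [isInducing_phi.continuous_iff]
  refine continuous_pi fun w => ?_
  show Continuous fun x : AutT d => (s : Equiv.Perm (V d)) ((x : Equiv.Perm (V d)) w)
  exact continuous_of_discreteTopology.comp (continuous_eval w)

lemma isClosed_levelStab (n : ℕ) : IsClosed ((levelStab d n : Subgroup (AutT d)) : Set (AutT d)) := by
  have : ((levelStab d n : Subgroup (AutT d)) : Set (AutT d))
      = ⋂ (v : V d), {g : AutT d | v.length = n → (g : Equiv.Perm (V d)) v = v} := by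
    ext g
    simp only [Set.mem_iInter, Set.mem_setOf_eq]
    rfl
  rw [this]
  refine isClosed_iInter fun v => ?_
  by_cases hv : v.length = n
  · simp only [hv, forall_true_left]
    exact IsClosed.preimage (continuous_eval v) (isClosed_discrete {v})
  · have : {g : AutT d | v.length = n → (g : Equiv.Perm (V d)) v = v} = Set.univ := by
      ext g; simp [hv]
    rw [this]
    exact isClosed_univ

end Topology

section KG
variable {d : ℕ} {G : Subgroup (AutT d)}

lemma isClosed_KGset (hclosed : IsClosed (G : Set (AutT d))) :
    IsClosed (KGset d G) := by
  have heq : KGset d G = ⋂ (v : V d),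
      (fun g => sectionAt g v) '' ((G : Set (AutT d)) ∩ (levelStab d v.length : Subgroup (AutT d))) := by
    ext x
    simp only [KGset, Set.mem_setOf_eq, Set.mem_iInter, Set.mem_image, Set.mem_inter_iff,
      SetLike.mem_coe]
    constructor
    · intro h v
      obtain ⟨g, h1, h2, h3⟩ := h v
      exact ⟨g, ⟨h1, h2⟩, h3⟩
    · intro h v
      obtain ⟨g, ⟨h1, h2⟩, h3⟩ := h v
      exact ⟨g, h1, h2, h3⟩
  rw [heq]
  refine isClosed_iInter fun v => ?_
  have hcpt : IsCompact ((G : Set (AutT d)) ∩ (levelStab d v.length : Subgroup (AutT d))) :=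
    (hclosed.inter (isClosed_levelStab v.length)).isCompact
  exact (hcpt.image (continuous_sectionAt v)).isClosed

lemma isClosed_coset_KG (hclosed : IsClosed (G : Set (AutT d))) (s : AutT d) :
    IsClosed {x : AutT d | s⁻¹ * x ∈ KGset d G} :=
  IsClosed.preimage (continuous_mul_left s⁻¹) (isClosed_KGset hclosed)

/-- Openness of any subgroup squeezed between `K_G` and `G`. -/
lemma isOpen_of_KG_le (hclosed : IsClosed (G : Set (AutT d)))
    (S : Finset (AutT d)) (hScover : ∀ g ∈ G, ∃ s ∈ S, s⁻¹ * g ∈ KGset d G)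
    (H : Subgroup (AutT d)) (hHle : H ≤ G) (hKH : ∀ x ∈ KGset d G, x ∈ H) :
    IsOpen (Subtype.val ⁻¹' (H : Set (AutT d)) : Set ↥G) := by
  rw [← isClosed_compl_iff]
  have heq : (Subtype.val ⁻¹' (H : Set (AutT d)) : Set ↥G)ᶜ
      = ⋃ s ∈ {s : AutT d | s ∈ S ∧ s ∉ H},
          (Subtype.val ⁻¹' {x : AutT d | s⁻¹ * x ∈ KGset d G} : Set ↥G) := by
    ext x
    simp only [Set.mem_compl_iff, Set.mem_preimage, SetLike.mem_coe, Set.mem_iUnion,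
      Set.mem_setOf_eq]
    constructor
    · intro hx
      obtain ⟨s, hsS, hsK⟩ := hScover (x : AutT d) x.2
      refine ⟨s, ⟨hsS, fun hsH => hx ?_⟩, hsK⟩
      have : (s⁻¹ * (x : AutT d)) ∈ H := hKH _ hsK
      have := mul_mem hsH this
      rwa [mul_inv_cancel_left] at this
    · rintro ⟨s, ⟨hsS, hsH⟩, hsK⟩ hxH
      refine hsH ?_
      have h1 : (s⁻¹ * (x : AutT d)) ∈ H := hKH _ hsK
      have := mul_mem hxH (inv_mem h1)
      rwa [mul_inv_rev, inv_inv, ← mul_assoc, mul_inv_cancel, one_mul] at this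
  rw [heq]
  refine Set.Finite.isClosed_biUnion ?_ ?_
  · exact Set.Finite.subset S.finite_toSet (fun s hs => hs.1)
  · intro s _
    exact (isClosed_coset_KG hclosed s).preimage continuous_subtype_val

end KG

section Nbhd
variable {d : ℕ} {G : Subgroup (AutT d)}

lemma exists_levelStab_le (hd : 0 < d) {Hs : Set (AutT d)} (h1 : (1 : AutT d) ∈ Hs)
    (hopen : IsOpen (Subtype.val ⁻¹' Hs : Set ↥G)) :
    ∃ n : ℕ, 1 ≤ n ∧ ∀ g : AutT d, g ∈ G → g ∈ levelStab d n → g ∈ Hs := by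
  obtain ⟨U, hU, hUeq⟩ := isOpen_induced_iff.mp hopen
  obtain ⟨W, hW, hWeq⟩ := isOpen_induced_iff.mp hU
  obtain ⟨Z, hZ, hZeq⟩ := isOpen_induced_iff.mp hW
  -- Z is open in the Pi space
  have h1U : (1 : AutT d) ∈ U := by
    have : (⟨1, one_mem G⟩ : ↥G) ∈ Subtype.val ⁻¹' Hs := h1
    rw [← hUeq] at this
    exact this
  have h1Z : (fun v : V d => v) ∈ Z := by
    rw [← hWeq] at h1U
    rw [← hZeq] at h1U
    exact h1U
  obtain ⟨I, u, hIu, hIsub⟩ := isOpen_pi_iff.mp hZ _ h1Z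
  refine ⟨(I.sup fun v => v.length) + 1, by omega, fun g hgG hgS => ?_⟩
  have hgZ : (phi d g) ∈ Z := by
    apply hIsub
    intro v hv
    have hfix : (g : Equiv.Perm (V d)) v = v :=
      levelStab_fix_le hd hgS
        (le_trans (Finset.le_sup (f := fun v : V d => v.length) hv) (Nat.le_succ _))
    have : phi d g v = v := hfix
    rw [this]
    exact (hIu v hv).2
  have hgU : g ∈ U := by
    rw [← hWeq, ← hZeq] at h1U ⊢
    exact hgZ
  have : (⟨g, hgG⟩ : ↥G) ∈ Subtype.val ⁻¹' Hs := by
    rw [← hUeq]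
    exact hgU
  exact this

end Nbhd

section TruncFin
variable {d : ℕ} {G : Subgroup (AutT d)}

/-- restriction of an automorphism to the truncated tree -/
def trunc (d m : ℕ) (g : AutT d) : {l : V d // l.length ≤ m} → {l : V d // l.length ≤ m} :=
  fun v => ⟨(g : Equiv.Perm (V d)) v.1, by rw [autT_len]; exact v.2⟩

lemma truncEq_of_trunc_eq {m : ℕ} {g h : AutT d} (H : trunc d m g = trunc d m h) :
    truncEq d m g h := by
  intro w hw
  have := congrFun H ⟨w, hw⟩
  exact congrArg Subtype.val this

lemma exists_uniform_N (hd : 0 < d) {m : ℕ}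
    (hall : ∀ b ∈ G, ∃ N, PP G m N b) :
    ∃ N, ∀ b ∈ G, PP G m N b := by
  have hfin : Finite ({l : V d // l.length ≤ m} → {l : V d // l.length ≤ m}) := by
    have := finite_len_le (d := d) m
    exact Pi.finite
  have hc : ∀ c : {l : V d // l.length ≤ m} → {l : V d // l.length ≤ m},
      ∃ N, ∀ b ∈ G, trunc d m b = c → PP G m N b := by
    intro c
    by_cases hex : ∃ b₀, b₀ ∈ G ∧ trunc d m b₀ = c
    · obtain ⟨b₀, hb₀G, hb₀c⟩ := hex
      obtain ⟨N, hN⟩ := hall b₀ hb₀G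
      refine ⟨N, fun b hbG hbc => ?_⟩
      -- b and b₀ have the same truncation
      have htr : truncEq d m b₀ b := truncEq_of_trunc_eq (by rw [hb₀c, ← hbc])
      intro n hn v hv
      obtain ⟨g, hgG, hgS, hgv, hgt⟩ := hN n hn v hv
      exact ⟨g, hgG, hgS, hgv, truncEq_trans hgt htr⟩
    · exact ⟨0, fun b hbG hbc => absurd ⟨b, hbG, hbc⟩ hex⟩
  choose f hf using hc
  have : Fintype ({l : V d // l.length ≤ m} → {l : V d // l.length ≤ m}) := Fintype.ofFinite _
  refine ⟨Finset.univ.sup f, fun b hbG => ?_⟩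
  exact PP_mono_N hd (Finset.le_sup (Finset.mem_univ _)) (hf (trunc d m b) b hbG rfl)

end TruncFin

/-- The subgroup of elements of `G` all of whose truncations are uniformly
approximated by sections of level stabilizers. -/
def mixSubgroup (d : ℕ) (hd : 0 < d) (G : Subgroup (AutT d)) : Subgroup (AutT d) where
  carrier := {b | b ∈ G ∧ ∀ m : ℕ, ∃ N, PP G m N b}
  one_mem' := ⟨one_mem G, fun _ => ⟨0, PP_one⟩⟩
  mul_mem' := by
    rintro a b ⟨haG, haP⟩ ⟨hbG, hbP⟩
    refine ⟨mul_mem haG hbG, fun m => ?_⟩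
    obtain ⟨Na, hNa⟩ := haP m
    obtain ⟨Nb, hNb⟩ := hbP m
    exact ⟨max Na Nb, PP_mul (PP_mono_N hd (le_max_left _ _) hNa)
      (PP_mono_N hd (le_max_right _ _) hNb)⟩
  inv_mem' := by
    rintro a ⟨haG, haP⟩
    refine ⟨inv_mem haG, fun m => ?_⟩
    obtain ⟨Na, hNa⟩ := haP m
    exact ⟨Na, PP_inv hNa⟩

lemma mem_mixSubgroup {d : ℕ} {hd : 0 < d} {G : Subgroup (AutT d)} {b : AutT d} :
    b ∈ mixSubgroup d hd G ↔ b ∈ G ∧ ∀ m : ℕ, ∃ N, PP G m N b := Iff.rfl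

/-- Let `G ≤ Aut(T)` be a virtually super strongly fractal closed
subgroup.  Then `G` is mixing if and only if `G` has no proper projection-invariant
open subgroup. -/
theorem mixing_iff_no_proper_projInvariant_open_subgroup
    (d : ℕ) (hd : 2 ≤ d) (G : Subgroup (AutT d))
    (hclosed : IsClosed (G : Set (AutT d)))
    (hvssf : VirtSuperStronglyFractal d G) :
    Mixing d G ↔
      ¬ ∃ H : Subgroup (AutT d), H ≤ G ∧ H ≠ G ∧ ProjInvariant d H ∧
          IsOpen (Subtype.val ⁻¹' (H : Set (AutT d)) : Set ↥G) := by
  obtain ⟨hfr, hst, S, hSsub, hScover⟩ := hvssf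
  have hd0 : 0 < d := by omega
  constructor
  · rintro ⟨-, -, hmix⟩ ⟨H, hle, hne, hproj, hopen⟩
    apply hne
    refine le_antisymm hle fun b hbG => ?_
    obtain ⟨n, hn1, hnH⟩ := exists_levelStab_le (G := G) hd0 (one_mem H) hopen
    obtain ⟨N, hN⟩ := hmix n hn1
    set v : V d := List.replicate (n + N) ⟨0, hd0⟩ with hv
    have hvlen : v.length = n + N := by simp [hv]
    have hsect := hN n hn1 v (le_of_eq hvlen.symm)
    obtain ⟨g, hgG, hgS, hgv, hgt⟩ := (hsect b).mpr ⟨b, hbG, truncEq_refl _ _⟩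
    have hgH : g ∈ H := hnH g hgG hgS
    have hsH : sectionAt g v ∈ H := hproj g hgH v hgv
    have hz : (sectionAt g v)⁻¹ * b ∈ levelStab d n := truncEq_inv_mul_mem hgt
    have hzG : (sectionAt g v)⁻¹ * b ∈ G := mul_mem (inv_mem (hle hsH)) hbG
    have hzH : (sectionAt g v)⁻¹ * b ∈ H := hnH _ hzG hz
    have := mul_mem hsH hzH
    rwa [mul_inv_cancel_left] at this
  · intro hno
    refine ⟨hfr, hst, ?_⟩
    intro m hm
    set H : Subgroup (AutT d) := mixSubgroup d hd0 G with hHdef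
    have hHle : H ≤ G := fun b hb => hb.1
    have hKH : ∀ x ∈ KGset d G, x ∈ H := by
      intro x hx
      have hxG : x ∈ G := by
        obtain ⟨g, hgG, -, hsec⟩ := hx ([] : V d)
        rw [← hsec]
        exact hfr.1 g hgG []
      exact ⟨hxG, fun m' => ⟨0, PP_of_KG hx⟩⟩
    have hproj : ProjInvariant d H := by
      rintro h ⟨hhG, hhP⟩ w hw
      refine ⟨hfr.1 h hhG w, fun m' => ?_⟩
      obtain ⟨N, hN⟩ := hhP (m' + w.length)
      exact ⟨N + 2 * w.length, PP_sectionAt hd0 hfr w hw hN⟩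
    have hopen : IsOpen (Subtype.val ⁻¹' (H : Set (AutT d)) : Set ↥G) :=
      isOpen_of_KG_le hclosed S hScover H hHle hKH
    have hHG : H = G := by
      by_contra hneq
      exact hno ⟨H, hHle, hneq, hproj, hopen⟩
    have hall : ∀ b ∈ G, ∃ N, PP G m N b := by
      intro b hb
      rw [← hHG] at hb
      exact hb.2 m
    obtain ⟨N, hN⟩ := exists_uniform_N hd0 hall
    refine ⟨N, fun n hn v hv a => ?_⟩
    constructor
    · rintro ⟨g, hgG, hgS, hgv, hgt⟩
      exact ⟨sectionAt g v, hfr.1 g hgG v, hgt⟩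
    · rintro ⟨b, hbG, hbt⟩
      obtain ⟨g, hgG, hgS, hgv, hgt⟩ := hN b hbG (v.length - N) (by omega) v (by omega)
      exact ⟨g, hgG, levelStab_mono hd0 (by omega) hgS, hgv, truncEq_trans hgt hbt⟩

end ArbGal
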